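/- Let p ≥ 1, let x₁, …, x_p ∈ ℝ be fixed context points, and let α > 0. Then the single-head softmax attention output satisfies A_α(x) − x → 0 as x → −∞. -/

import Mathlib

open Filter Real

/-- Denominator of the softmax attention: `D_α(x) = exp(α x²) + ∑ₖ exp(α x xₖ)`. -/
noncomputable def attnDenom (p : ℕ) (xs : Fin p → ℝ) (α : ℝ) (x : ℝ) : ℝ :=
  Real.exp (α * x ^ 2) + ∑ k, Real.exp (α * x * xs k)

/-- Single-head softmax attention output
`A_α(x) = (∑ⱼ xⱼ exp(α x xⱼ) + x exp(α x²)) / D_α(x)`. -/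
noncomputable def attnOut (p : ℕ) (xs : Fin p → ℝ) (α : ℝ) (x : ℝ) : ℝ :=
  (∑ j, xs j * Real.exp (α * x * xs j) + x * Real.exp (α * x ^ 2)) / attnDenom p xs α x

/-- `α x (c - x) → -∞` as `x → -∞`. -/
lemma attn_aux1 {α : ℝ} (hα : 0 < α) (c : ℝ) :
    Tendsto (fun x : ℝ => α * x * (c - x)) atBot atBot := by
  have h1 : Tendsto (fun x : ℝ => α * x) atBot atBot :=
    tendsto_id.const_mul_atBot hα
  have h2 : Tendsto (fun x : ℝ => c - x) atBot atTop := by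
    exact (tendsto_atTop_add_const_left atBot c tendsto_neg_atBot_atTop).congr fun x => (sub_eq_add_neg c x).symm
  exact h1.atBot_mul_atTop₀ h2

/-- `u e^u → 0` as `u → -∞`. -/
lemma attn_aux2 : Tendsto (fun u : ℝ => u * Real.exp u) atBot (nhds 0) := by
  have h : Tendsto (fun v : ℝ => v * Real.exp (-v)) atTop (nhds 0) := by
    simpa using tendsto_pow_mul_exp_neg_atTop_nhds_zero 1
  have := (h.comp tendsto_neg_atBot_atTop).neg
  simpa using this

/-- `(c - x) e^{α x (c - x)} → 0` as `x → -∞`. -/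
lemma attn_aux3 {α : ℝ} (hα : 0 < α) (c : ℝ) :
    Tendsto (fun x : ℝ => (c - x) * Real.exp (α * x * (c - x))) atBot (nhds 0) := by
  have hinv : Tendsto (fun x : ℝ => (α * x)⁻¹) atBot (nhds 0) := by
    have h1 : Tendsto (fun x : ℝ => -(α * x)) atBot atTop := by
      have := tendsto_id.const_mul_atBot (l := atBot) hα
      exact tendsto_neg_atBot_atTop.comp this
    have h2 := h1.inv_tendsto_atTop
    have h3 := h2.neg
    simp only [Pi.inv_apply, Pi.neg_apply] at h3
    simpa only [neg_inv, neg_neg, neg_zero] using h3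
  have hue : Tendsto (fun x : ℝ => (α * x * (c - x)) * Real.exp (α * x * (c - x))) atBot (nhds 0) :=
    attn_aux2.comp (attn_aux1 hα c)
  have h := hinv.mul hue
  rw [zero_mul] at h
  apply h.congr'
  filter_upwards [eventually_lt_atBot 0] with x hx
  have hax : α * x ≠ 0 := (mul_neg_of_pos_of_neg hα hx).ne
  field_simp
  field_simp [hx.ne]

/-- `e^{α x (c - x)} → 0` as `x → -∞`. -/
lemma attn_aux4 {α : ℝ} (hα : 0 < α) (c : ℝ) :
    Tendsto (fun x : ℝ => Real.exp (α * x * (c - x))) atBot (nhds 0) :=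
  Real.tendsto_exp_atBot.comp (attn_aux1 hα c)

/-- Algebraic identity: `A_α(x) - x` as a ratio normalized by `exp(α x²)`. -/
lemma attn_keyeq (p : ℕ) (xs : Fin p → ℝ) (α : ℝ) (x : ℝ) :
    attnOut p xs α x - x =
      (∑ j, (xs j - x) * Real.exp (α * x * (xs j - x))) /
        (1 + ∑ j, Real.exp (α * x * (xs j - x))) := by
  have hE : (0:ℝ) < Real.exp (α * x ^ 2) := Real.exp_pos _
  have hT : (0:ℝ) ≤ ∑ k, Real.exp (α * x * xs k) :=
    Finset.sum_nonneg fun k _ => (Real.exp_pos _).le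
  have hD : (0:ℝ) < attnDenom p xs α x := by
    unfold attnDenom; linarith
  have h1 : ∀ j : Fin p, Real.exp (α * x * (xs j - x)) =
      Real.exp (α * x * xs j) / Real.exp (α * x ^ 2) := by
    intro j
    rw [← Real.exp_sub]
    congr 1
    ring
  simp only [h1, mul_div_assoc']
  rw [← Finset.sum_div, ← Finset.sum_div]
  have h2 : (∑ j, (xs j - x) * Real.exp (α * x * xs j)) =
      (∑ j, xs j * Real.exp (α * x * xs j)) - x * ∑ j, Real.exp (α * x * xs j) := by
    rw [Finset.mul_sum, ← Finset.sum_sub_distrib]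
    exact Finset.sum_congr rfl fun j _ => by ring
  rw [h2]
  unfold attnOut attnDenom
  unfold attnDenom at hD
  rw [div_sub' hD.ne']
  rw [div_eq_div_iff hD.ne' (by positivity)]
  field_simp
  simp only [show ∀ j, xs j * α * x = α * x * xs j from fun j => by ring]
  ring

theorem stmt_1 (p : ℕ) (hp : 1 ≤ p) (xs : Fin p → ℝ) (α : ℝ) (hα : 0 < α) :
    Filter.Tendsto (fun x : ℝ => attnOut p xs α x - x) Filter.atBot (nhds 0) := by
  have heq : (fun x : ℝ => attnOut p xs α x - x) =
      fun x => (∑ j, (xs j - x) * Real.exp (α * x * (xs j - x))) /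
        (1 + ∑ j, Real.exp (α * x * (xs j - x))) :=
    funext (attn_keyeq p xs α)
  rw [heq]
  have hnum : Tendsto (fun x : ℝ => ∑ j, (xs j - x) * Real.exp (α * x * (xs j - x)))
      atBot (nhds 0) := by
    have := tendsto_finset_sum (Finset.univ : Finset (Fin p))
      (fun j _ => attn_aux3 hα (xs j))
    simpa using this
  have hden : Tendsto (fun x : ℝ => 1 + ∑ j, Real.exp (α * x * (xs j - x)))
      atBot (nhds 1) := by
    have := tendsto_finset_sum (Finset.univ : Finset (Fin p))
      (fun j _ => attn_aux4 hα (xs j))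
    simpa using (tendsto_const_nhds (x := (1:ℝ)) (f := atBot)).add this
  have hdiv := hnum.div hden one_ne_zero
  rw [zero_div] at hdiv
  exact hdiv
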